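/- Let (f_t)_{t∈[0,t₀]} be C¹ circle maps and suppose there exist σ₀ > 1 and δ₁ > 0 (an injectivity radius) such that each f_t restricted to any ball of radius δ₁ is a diffeomorphism onto its image. Fix x, y ∈ S¹ and ω ∈ [0,t₀]^ℕ with dist(f_ω^n(x), f_ω^n(y)) ≤ δ for all n ≥ 0, where 0 < δ < δ₁. If there is an increasing sequence n₁ < n₂ < … such that along the blocks [n_{2k−1}, n_{2k}] every step derivative on the arc joining the two orbits is at least σ₀, and every other step derivative is at least 1, then dist(x, y) ≤ σ₀^{−Σ_{j=1}^{k}(n_{2j}−n_{2j−1})} for every k; in particular if Σ(n_{2j}−n_{2j−1}) = ∞ then x = y. -/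

import Mathlib

open Set

/-- The random orbit `f_ω^n = f_{ω_{n-1}} ∘ ⋯ ∘ f_{ω_0}`. -/
def randIter (f : ℝ → ℝ → ℝ) (ω : ℕ → ℝ) : ℕ → ℝ → ℝ
  | 0 => id
  | n + 1 => fun x => f (ω n) (randIter f ω n x)

/-- Backward contraction estimate: if two random orbits stay within distance
`δ < δ₁` of each other (with `δ₁` an injectivity radius and `δ ≤ 1`, the
circle having total length `1`), every step derivative on the arc joining the
orbits is at least `1`, and along the blocks `[n_{2k-1}, n_{2k})` it is at
least `σ₀ > 1`, then `dist(x,y) ≤ σ₀^{-Σ_k (n_{2k} - n_{2k-1})}`; in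
particular if the block lengths have divergent sum then `x = y`. -/
lemma step_lemma (F : ℝ → ℝ) (hF : Differentiable ℝ F) (a b m : ℝ) (hm : 0 ≤ m)
    (h : ∀ z ∈ Set.uIcc a b, m ≤ |deriv F z|) : m * |a - b| ≤ |F a - F b| := by
  rcases eq_or_ne a b with rfl | hab
  · simp
  · wlog hlt : a < b generalizing a b
    · have := this b a (fun z hz => h z (by rwa [Set.uIcc_comm])) hab.symm
        (lt_of_le_of_ne (not_lt.mp hlt) hab.symm)
      rw [abs_sub_comm a b, abs_sub_comm (F a) (F b)]
      exact this
    obtain ⟨c, hc, hderiv⟩ := exists_deriv_eq_slope F hlt hF.continuous.continuousOn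
      (hF.differentiableOn)
    have hc' : c ∈ Set.uIcc a b := by
      rw [Set.uIcc_of_le hlt.le]; exact Set.Ioo_subset_Icc_self hc
    have hFab : |F a - F b| = |deriv F c| * |a - b| := by
      rw [hderiv, abs_div, abs_sub_comm (F b) (F a), abs_sub_comm b a,
        div_mul_cancel₀]
      simpa [sub_eq_zero] using hab
    rw [hFab]
    exact mul_le_mul_of_nonneg_right (h c hc') (abs_nonneg _)

theorem stmt18 (f : ℝ → ℝ → ℝ) (hdiff : ∀ t, Differentiable ℝ (f t))
    (δ₁ : ℝ) (hδ₁ : 0 < δ₁)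
    (hinj : ∀ t x, Set.InjOn (f t) (Metric.ball x δ₁))
    (x y : ℝ) (ω : ℕ → ℝ)
    (δ : ℝ) (hδ0 : 0 < δ) (hδ : δ < δ₁) (hδ1 : δ ≤ 1)
    (hclose : ∀ n : ℕ, |randIter f ω n x - randIter f ω n y| ≤ δ)
    (n : ℕ → ℕ) (hmono : StrictMono n)
    (σ₀ : ℝ) (hσ₀ : 1 < σ₀)
    (hexp : ∀ j z, (∃ k, j ∈ Set.Ico (n (2 * k)) (n (2 * k + 1))) →
      z ∈ Set.uIcc (randIter f ω j x) (randIter f ω j y) →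
      σ₀ ≤ |deriv (f (ω j)) z|)
    (hone : ∀ j z, z ∈ Set.uIcc (randIter f ω j x) (randIter f ω j y) →
      1 ≤ |deriv (f (ω j)) z|) :
    (∀ k : ℕ,
      |x - y| ≤ (σ₀ ^ (∑ i ∈ Finset.range k, (n (2 * i + 1) - n (2 * i))))⁻¹) ∧
    ((∀ N : ℕ, ∃ k : ℕ,
        N ≤ ∑ i ∈ Finset.range k, (n (2 * i + 1) - n (2 * i))) → x = y) := by
  classical
  have hσ0 : (0:ℝ) < σ₀ := lt_trans one_pos hσ₀
  set g := randIter f ω with hg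
  set P : ℕ → Prop := fun i => ∃ k, i ∈ Set.Ico (n (2 * k)) (n (2 * k + 1)) with hP
  set c : ℕ → ℕ := fun j => ((Finset.range j).filter P).card with hc
  -- key induction
  have key : ∀ j, σ₀ ^ (c j) * |x - y| ≤ |g j x - g j y| := by
    intro j
    induction j with
    | zero => simp [hc, hg, randIter]
    | succ j ih =>
      have hm : (0:ℝ) ≤ if P j then σ₀ else 1 := by split <;> positivity
      have hstep : (if P j then σ₀ else 1) * |g j x - g j y| ≤ |g (j+1) x - g (j+1) y| := by
        have : g (j+1) x = f (ω j) (g j x) := rfl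
        rw [this, show g (j+1) y = f (ω j) (g j y) from rfl]
        apply step_lemma (f (ω j)) (hdiff _) _ _ _ hm
        intro z hz
        by_cases hPj : P j
        · simpa [hPj] using hexp j z hPj hz
        · simpa [hPj] using hone j z hz
      have hcsucc : c (j+1) = c j + (if P j then 1 else 0) := by
        simp only [hc, Finset.range_add_one, Finset.filter_insert]
        split
        · rw [Finset.card_insert_of_notMem (by simp)]
        · simp
      calc σ₀ ^ (c (j+1)) * |x - y|
          = (if P j then σ₀ else 1) * (σ₀ ^ (c j) * |x - y|) := by
            rw [hcsucc]; split <;> ring_nf <;> rw [pow_succ] <;> ring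
        _ ≤ (if P j then σ₀ else 1) * |g j x - g j y| :=
            mul_le_mul_of_nonneg_left ih hm
        _ ≤ _ := hstep
  -- counting: S k ≤ c (n (2k))
  have hcount : ∀ k, (∑ i ∈ Finset.range k, (n (2 * i + 1) - n (2 * i))) ≤ c (n (2 * k)) := by
    intro k
    have hdisj : (↑(Finset.range k : Finset ℕ) : Set ℕ).PairwiseDisjoint
        (fun i => Finset.Ico (n (2 * i)) (n (2 * i + 1))) := by
      intro i hi i' hi' hne
      wlog hlt : i < i' generalizing i i'
      · exact (this hi' hi hne.symm (by omega)).symm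
      apply Finset.disjoint_left.mpr
      intro m hm hm'
      simp only [Finset.mem_Ico] at hm hm'
      have : n (2 * i + 1) ≤ n (2 * i') := hmono.monotone (by omega)
      omega
    have hsub : (Finset.range k).biUnion (fun i => Finset.Ico (n (2 * i)) (n (2 * i + 1)))
        ⊆ (Finset.range (n (2 * k))).filter P := by
      intro m hm
      simp only [Finset.mem_biUnion, Finset.mem_Ico, Finset.mem_range] at hm
      obtain ⟨i, hi, h1, h2⟩ := hm
      refine Finset.mem_filter.mpr ⟨Finset.mem_range.mpr ?_, ⟨i, h1, h2⟩⟩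
      exact lt_of_lt_of_le h2 (hmono.monotone (by omega))
    calc (∑ i ∈ Finset.range k, (n (2 * i + 1) - n (2 * i)))
        = ((Finset.range k).biUnion (fun i => Finset.Ico (n (2 * i)) (n (2 * i + 1)))).card := by
          rw [Finset.card_biUnion hdisj]
          exact Finset.sum_congr rfl (fun i _ => (Nat.card_Ico _ _).symm)
      _ ≤ _ := Finset.card_le_card hsub
  have part1 : ∀ k : ℕ,
      |x - y| ≤ (σ₀ ^ (∑ i ∈ Finset.range k, (n (2 * i + 1) - n (2 * i))))⁻¹ := by
    intro k
    set S := ∑ i ∈ Finset.range k, (n (2 * i + 1) - n (2 * i)) with hS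
    have h1 : σ₀ ^ (c (n (2 * k))) * |x - y| ≤ 1 :=
      le_trans (le_trans (key _) (hclose _)) hδ1
    have hpow : σ₀ ^ S ≤ σ₀ ^ (c (n (2 * k))) := pow_le_pow_right₀ hσ₀.le (hcount k)
    have h2 : σ₀ ^ S * |x - y| ≤ 1 :=
      le_trans (mul_le_mul_of_nonneg_right hpow (abs_nonneg _)) h1
    have hp : (0:ℝ) < σ₀ ^ S := by positivity
    rw [show (σ₀ ^ S)⁻¹ = 1 / σ₀ ^ S from (one_div _).symm, le_div_iff₀ hp]
    nlinarith
  refine ⟨part1, ?_⟩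
  intro hdiv
  by_contra hxy
  have h0 : 0 < |x - y| := abs_pos.mpr (sub_ne_zero.mpr hxy)
  obtain ⟨N, hN⟩ := pow_unbounded_of_one_lt |x - y|⁻¹ hσ₀
  obtain ⟨k, hk⟩ := hdiv N
  set S := ∑ i ∈ Finset.range k, (n (2 * i + 1) - n (2 * i)) with hS
  have hle : σ₀ ^ N ≤ σ₀ ^ S := pow_le_pow_right₀ hσ₀.le hk
  have hlt : |x - y|⁻¹ < σ₀ ^ S := lt_of_lt_of_le hN hle
  have hp : (0:ℝ) < σ₀ ^ S := by positivity
  have h2 : (σ₀ ^ S)⁻¹ < |x - y| := by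
    rw [inv_lt_comm₀ hp h0]
    exact lt_of_lt_of_le hN hle
  exact absurd (part1 k) (not_le.mpr h2)
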